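/- Let M₁,…,Mₖ and M'₁,…,M'ₖ be positive semidefinite operators on a finite-dimensional complex Hilbert space with ∑ᵢ Tr(Mᵢ) ≤ 1, ∑ᵢ Tr(M'ᵢ) ≤ 1, and ∑ᵢ ‖Mᵢ − M'ᵢ‖₁ ≤ 2ε. Then ∑ᵢ ( ‖√Mᵢ‖₂ + ‖√M'ᵢ‖₂ ) · ‖√Mᵢ − √M'ᵢ‖₂ ≤ √(8ε). -/

import Mathlib

open Matrix
open scoped ComplexOrder

/-- The square root of a positive semidefinite matrix (as in Mathlib of December 2024). -/
noncomputable def Matrix.PosSemidef.sqrt {n 𝕜 : Type*} [RCLike 𝕜] [Fintype n] [DecidableEq n]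
    {A : Matrix n n 𝕜} (hA : A.PosSemidef) : Matrix n n 𝕜 :=
  hA.1.eigenvectorUnitary.1 * diagonal ((↑) ∘ (√·) ∘ hA.1.eigenvalues) *
  (star hA.1.eigenvectorUnitary : Matrix n n 𝕜)

/-- The trace (nuclear) norm of a complex matrix: the trace of `√(AᴴA)`. -/
noncomputable def traceNorm {n : Type*} [Fintype n] [DecidableEq n]
    (A : Matrix n n ℂ) : ℝ :=
  ((Matrix.posSemidef_conjTranspose_mul_self A).sqrt.trace).re

/-- The Frobenius (Hilbert–Schmidt) norm of a complex matrix. -/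
noncomputable def frobNorm {n : Type*} [Fintype n] [DecidableEq n]
    (A : Matrix n n ℂ) : ℝ :=
  Real.sqrt ((Aᴴ * A).trace).re

set_option linter.unusedSectionVars false

section PortAux

open scoped MatrixOrder

variable {n : Type*} [Fintype n] [DecidableEq n]

lemma Matrix.PosSemidef.sqrt_eq_cfc' {A : Matrix n n ℂ} (hA : A.PosSemidef) :
    hA.sqrt = CFC.sqrt A := by
  rw [CFC.sqrt_eq_real_sqrt A hA.nonneg, cfcₙ_eq_cfc, hA.1.cfc_eq]
  simp [Matrix.IsHermitian.cfc, Matrix.PosSemidef.sqrt, Function.comp_def]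

lemma Matrix.PosSemidef.posSemidef_sqrt {A : Matrix n n ℂ} (hA : A.PosSemidef) :
    hA.sqrt.PosSemidef := by
  rw [hA.sqrt_eq_cfc']
  exact (CFC.sqrt_nonneg A).posSemidef

lemma Matrix.PosSemidef.sqrt_mul_self {A : Matrix n n ℂ} (hA : A.PosSemidef) :
    hA.sqrt * hA.sqrt = A := by
  rw [hA.sqrt_eq_cfc']
  exact CFC.sqrt_mul_sqrt_self A hA.nonneg

lemma Matrix.PosSemidef.eq_sqrt_of_sq_eq {X A : Matrix n n ℂ} (hX : X.PosSemidef)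
    (hA : A.PosSemidef) (h : X ^ 2 = A) : X = hA.sqrt := by
  rw [hA.sqrt_eq_cfc', eq_comm, CFC.sqrt_eq_iff A X hA.nonneg hX.nonneg, ← sq]
  exact h

lemma spec' {C : Matrix n n ℂ} (hC : C.IsHermitian) :
    C = (hC.eigenvectorUnitary : Matrix n n ℂ) * diagonal (RCLike.ofReal ∘ hC.eigenvalues)
      * star (hC.eigenvectorUnitary : Matrix n n ℂ) := by
  conv_lhs => rw [hC.spectral_theorem]
  simp [Unitary.conjStarAlgAut_apply]

lemma Matrix.IsHermitian.star_mul_self_mul_eq_diagonal {C : Matrix n n ℂ} (hC : C.IsHermitian) :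
    star (hC.eigenvectorUnitary : Matrix n n ℂ) * C * (hC.eigenvectorUnitary : Matrix n n ℂ)
      = diagonal (RCLike.ofReal ∘ hC.eigenvalues) := by
  have h1 : star (hC.eigenvectorUnitary : Matrix n n ℂ) * (hC.eigenvectorUnitary : Matrix n n ℂ)
      = 1 := hC.eigenvectorUnitary.2.1
  refine (congrArg (fun Z => star (hC.eigenvectorUnitary : Matrix n n ℂ) * Z *
    (hC.eigenvectorUnitary : Matrix n n ℂ)) (spec' hC)).trans ?_
  simp only [mul_assoc, h1, mul_one]
  rw [← mul_assoc, h1, one_mul]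

end PortAux

section Aux

variable {n : Type*} [Fintype n] [DecidableEq n]

lemma diag_re_nonneg {M : Matrix n n ℂ} (hM : M.PosSemidef) (i : n) :
    0 ≤ (M i i).re := by
  have := hM.re_dotProduct_nonneg (Pi.single i 1)
  simpa [dotProduct, Matrix.mulVec, Pi.single_apply] using this

lemma conj_key {U : Matrix n n ℂ} (hU1 : star U * U = 1) (d e : Matrix n n ℂ) :
    (U * d * star U) * (U * e * star U) = U * (d * e) * star U := by
  have h : star U * (U * (e * star U)) = e * star U := by
    rw [← mul_assoc, hU1, one_mul]
  simp only [mul_assoc, h]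

lemma conj_key2 {U : Matrix n n ℂ} (hU2 : U * star U = 1) (d e : Matrix n n ℂ) :
    (star U * d * U) * (star U * e * U) = star U * (d * e) * U := by
  have h : U * (star U * (e * U)) = e * U := by
    rw [← mul_assoc, hU2, one_mul]
  simp only [mul_assoc, h]

lemma conj_psd {U M : Matrix n n ℂ} (hM : M.PosSemidef) :
    (star U * M * U).PosSemidef := by
  rw [Matrix.star_eq_conjTranspose]
  exact hM.conjTranspose_mul_mul_same U

lemma conj_psd' {U M : Matrix n n ℂ} (hM : M.PosSemidef) :
    (U * M * star U).PosSemidef := by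
  rw [Matrix.star_eq_conjTranspose]
  exact hM.mul_mul_conjTranspose_same U

lemma abs_diag_bound {C : Matrix n n ℂ} (hC : C.IsHermitian) (U : Matrix n n ℂ)
    (hU2 : U * star U = 1) :
    ∑ i, |((star U * C * U) i i).re| ≤ ∑ i, |hC.eigenvalues i| := by
  set V : Matrix n n ℂ := (hC.eigenvectorUnitary : Matrix n n ℂ) with hVdef
  have hV1 : star V * V = 1 := hC.eigenvectorUnitary.2.1
  set mu := hC.eigenvalues with hmu
  set Cp : Matrix n n ℂ := V * diagonal (fun j => (Complex.ofReal (max (mu j) 0))) * star V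
    with hCpdef
  set Cm : Matrix n n ℂ := V * diagonal (fun j => (Complex.ofReal (max (-(mu j)) 0))) * star V
    with hCmdef
  have hCp : Cp.PosSemidef := conj_psd' (Matrix.posSemidef_diagonal_iff.mpr fun i =>
    Complex.zero_le_real.mpr (le_max_right _ _))
  have hCm : Cm.PosSemidef := conj_psd' (Matrix.posSemidef_diagonal_iff.mpr fun i =>
    Complex.zero_le_real.mpr (le_max_right _ _))
  have hsub : Cp - Cm = C := by
    rw [hCpdef, hCmdef, ← Matrix.sub_mul, ← Matrix.mul_sub, Matrix.diagonal_sub]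
    have : (fun j => Complex.ofReal (max (mu j) 0) - Complex.ofReal (max (-(mu j)) 0))
        = RCLike.ofReal ∘ mu := by
      funext j
      rw [← Complex.ofReal_sub]
      have : max (mu j) 0 - max (-(mu j)) 0 = mu j := by
        rcases le_total (mu j) 0 with h | h
        · rw [max_eq_right h, max_eq_left (by linarith)]; ring
        · rw [max_eq_left h, max_eq_right (by linarith)]; ring
      rw [this]; rfl
    rw [this, ← spec' hC]
  have hkey : ∀ i, |((star U * C * U) i i).re|
      ≤ ((star U * (Cp + Cm) * U) i i).re := by
    intro i
    have hsplit : star U * C * U = star U * Cp * U - star U * Cm * U := by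
      rw [← hsub, Matrix.mul_sub, Matrix.sub_mul]
    have h1 : 0 ≤ ((star U * Cp * U) i i).re := diag_re_nonneg (conj_psd hCp) i
    have h2 : 0 ≤ ((star U * Cm * U) i i).re := diag_re_nonneg (conj_psd hCm) i
    have hsplit2 : star U * (Cp + Cm) * U = star U * Cp * U + star U * Cm * U := by
      rw [Matrix.mul_add, Matrix.add_mul]
    rw [hsplit, hsplit2, Matrix.sub_apply, Matrix.add_apply, Complex.sub_re, Complex.add_re]
    rw [abs_sub_le_iff]
    constructor <;> linarith
  calc ∑ i, |((star U * C * U) i i).re| ≤ ∑ i, ((star U * (Cp + Cm) * U) i i).re :=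
        Finset.sum_le_sum fun i _ => hkey i
    _ = ((star U * (Cp + Cm) * U).trace).re := by rw [Matrix.trace, Complex.re_sum]; rfl
    _ = ((Cp + Cm).trace).re := by
        rw [Matrix.trace_mul_cycle, hU2, one_mul]
    _ = ∑ i, |mu i| := by
        rw [hCpdef, hCmdef, ← Matrix.add_mul, ← Matrix.mul_add, Matrix.diagonal_add,
          Matrix.trace_mul_cycle, hV1, one_mul, Matrix.trace_diagonal,
          Complex.re_sum]
        refine Finset.sum_congr rfl fun i _ => ?_
        rw [← Complex.ofReal_add, Complex.ofReal_re]
        rcases le_total (mu i) 0 with h | h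
        · rw [max_eq_right h, max_eq_left (by linarith), abs_of_nonpos h]; ring
        · rw [max_eq_left h, max_eq_right (by linarith), abs_of_nonneg h]; ring

lemma traceNorm_hermitian {C : Matrix n n ℂ} (hC : C.IsHermitian) :
    traceNorm C = ∑ i, |hC.eigenvalues i| := by
  set U : Matrix n n ℂ := (hC.eigenvectorUnitary : Matrix n n ℂ) with hUdef
  have hU1 : star U * U = 1 := hC.eigenvectorUnitary.2.1
  set Dabs : Matrix n n ℂ := diagonal (fun i => (Complex.ofReal |hC.eigenvalues i|)) with hDabs
  set Dmu : Matrix n n ℂ := diagonal (RCLike.ofReal ∘ hC.eigenvalues) with hDmu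
  set X : Matrix n n ℂ := U * Dabs * star U with hXdef
  have hXpsd : X.PosSemidef := by
    rw [hXdef, Matrix.star_eq_conjTranspose]
    exact (Matrix.posSemidef_diagonal_iff.mpr fun i =>
      Complex.zero_le_real.mpr (abs_nonneg _)).mul_mul_conjTranspose_same U
  have hdd : Dabs * Dabs = Dmu * Dmu := by
    rw [hDabs, hDmu, diagonal_mul_diagonal, diagonal_mul_diagonal]
    refine congrArg Matrix.diagonal (funext fun i => ?_)
    show Complex.ofReal |hC.eigenvalues i| * Complex.ofReal |hC.eigenvalues i|
        = RCLike.ofReal (hC.eigenvalues i) * RCLike.ofReal (hC.eigenvalues i)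
    rw [← Complex.ofReal_mul, abs_mul_abs_self, Complex.ofReal_mul]
    rfl
  have hXsq : X ^ 2 = Cᴴ * C := by
    calc X ^ 2 = U * (Dabs * Dabs) * star U := by rw [pow_two, hXdef, conj_key hU1]
    _ = (U * Dmu * star U) * (U * Dmu * star U) := by rw [hdd, conj_key hU1]
    _ = C * C := by rw [← spec' hC]
    _ = Cᴴ * C := by rw [hC.eq]
  have hX : X = (Matrix.posSemidef_conjTranspose_mul_self C).sqrt :=
    hXpsd.eq_sqrt_of_sq_eq _ hXsq
  rw [traceNorm, ← hX, hXdef, Matrix.trace_mul_cycle, hU1, one_mul,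
    Matrix.trace_diagonal, Complex.re_sum]
  simp

lemma powers_stormer {A B : Matrix n n ℂ} (hA : A.PosSemidef) (hB : B.PosSemidef)
    (habs : ∑ i, |(hA.1.sub hB.1 : (A - B).IsHermitian).eigenvalues i| ≤ traceNorm (A - B)) :
    (((hA.sqrt - hB.sqrt) * (hA.sqrt - hB.sqrt)).trace).re ≤ traceNorm (A - B) := by
  set P := hA.sqrt with hPdef
  set Q := hB.sqrt with hQdef
  have hP := hA.posSemidef_sqrt
  have hQ := hB.posSemidef_sqrt
  set D : Matrix n n ℂ := P - Q with hDdef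
  set S : Matrix n n ℂ := P + Q with hSdef
  have hD : D.IsHermitian := hP.1.sub hQ.1
  set U : Matrix n n ℂ := (hD.eigenvectorUnitary : Matrix n n ℂ) with hUdef
  have hU1 : star U * U = 1 := hD.eigenvectorUnitary.2.1
  have hU2 : U * star U = 1 := hD.eigenvectorUnitary.2.2
  set lam := hD.eigenvalues with hlam
  have hdiag : star U * D * U = diagonal (RCLike.ofReal ∘ lam) :=
    hD.star_mul_self_mul_eq_diagonal
  -- LHS = ∑ lam i ^ 2
  have hLHS : ((D * D).trace).re = ∑ i, lam i ^ 2 := by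
    have hDD : D * D = U * (diagonal (RCLike.ofReal ∘ lam) * diagonal (RCLike.ofReal ∘ lam))
        * star U := by
      conv_lhs => rw [spec' hD]
      exact conj_key hU1 _ _
    rw [hDD, Matrix.trace_mul_cycle, hU1, one_mul, Matrix.diagonal_mul_diagonal,
      Matrix.trace_diagonal, Complex.re_sum]
    refine Finset.sum_congr rfl fun i _ => ?_
    show ((lam i : ℂ) * (lam i : ℂ)).re = _
    rw [← Complex.ofReal_mul, Complex.ofReal_re, pow_two]
  -- key identity conjugated
  set S' : Matrix n n ℂ := star U * S * U with hS'def
  set C' : Matrix n n ℂ := star U * (A - B) * U with hC'def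
  have hid : C' + C' = S' * diagonal (RCLike.ofReal ∘ lam)
      + diagonal (RCLike.ofReal ∘ lam) * S' := by
    have h0 : (P + Q) * (P - Q) + (P - Q) * (P + Q) = (P * P - Q * Q) + (P * P - Q * Q) := by
      noncomm_ring
    have h1 : S * D + D * S = (A - B) + (A - B) := by
      rw [hSdef, hDdef, h0, hA.sqrt_mul_self, hB.sqrt_mul_self]
    have h2 : star U * (S * D + D * S) * U = star U * ((A - B) + (A - B)) * U := by rw [h1]
    rw [Matrix.mul_add, Matrix.add_mul] at h2
    rw [← conj_key2 hU2, ← conj_key2 hU2, hdiag] at h2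
    rw [hS'def, hC'def, h2, Matrix.mul_add, Matrix.add_mul]
  -- diagonal entries
  have hdiagentry : ∀ i, (C' i i).re = lam i * (S' i i).re := by
    intro i
    have := congrArg (fun M : Matrix n n ℂ => ((M i i).re : ℝ)) hid
    simp only [Matrix.add_apply, Complex.add_re, Matrix.mul_diagonal, Matrix.diagonal_mul,
      Function.comp_apply] at this
    have h1 : ((S' i i) * (RCLike.ofReal (lam i) : ℂ)).re = (S' i i).re * lam i := by
      rw [show (RCLike.ofReal (lam i) : ℂ) = Complex.ofReal (lam i) from rfl]
      simp [Complex.mul_re]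
    have h2 : (((RCLike.ofReal (lam i) : ℂ)) * (S' i i)).re = lam i * (S' i i).re := by
      rw [show (RCLike.ofReal (lam i) : ℂ) = Complex.ofReal (lam i) from rfl]
      simp [Complex.mul_re]
    rw [h1, h2] at this
    linarith
  -- |lam i| ≤ S' i i .re
  have hSbound : ∀ i, |lam i| ≤ (S' i i).re := by
    intro i
    have hplus : (S + D).PosSemidef := by
      have : S + D = P + P := by rw [hSdef, hDdef]; abel
      rw [this]; exact hP.add hP
    have hminus : (S - D).PosSemidef := by
      have : S - D = Q + Q := by rw [hSdef, hDdef]; abel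
      rw [this]; exact hQ.add hQ
    have e1 : star U * (S + D) * U = S' + diagonal (RCLike.ofReal ∘ lam) := by
      rw [Matrix.mul_add, Matrix.add_mul, hdiag]
    have e2 : star U * (S - D) * U = S' - diagonal (RCLike.ofReal ∘ lam) := by
      rw [Matrix.mul_sub, Matrix.sub_mul, hdiag]
    have n1 : 0 ≤ ((star U * (S + D) * U) i i).re := diag_re_nonneg (conj_psd hplus) i
    have n2 : 0 ≤ ((star U * (S - D) * U) i i).re := diag_re_nonneg (conj_psd hminus) i
    rw [e1, Matrix.add_apply, Complex.add_re, Matrix.diagonal_apply_eq] at n1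
    rw [e2, Matrix.sub_apply, Complex.sub_re, Matrix.diagonal_apply_eq] at n2
    have hre : ((RCLike.ofReal ∘ lam) i : ℂ).re = lam i := by
      show ((lam i : ℂ)).re = lam i
      exact Complex.ofReal_re _
    rw [hre] at n1 n2
    rw [abs_le]
    constructor <;> linarith
  -- assemble
  have hstep : ∀ i, lam i ^ 2 ≤ |(C' i i).re| := by
    intro i
    have h0 : 0 ≤ (S' i i).re := le_trans (abs_nonneg _) (hSbound i)
    rw [hdiagentry i, abs_mul, abs_of_nonneg h0]
    calc lam i ^ 2 = |lam i| * |lam i| := by rw [pow_two]; exact (abs_mul_abs_self _).symm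
      _ ≤ |lam i| * (S' i i).re := mul_le_mul_of_nonneg_left (hSbound i) (abs_nonneg _)
  calc ((D * D).trace).re = ∑ i, lam i ^ 2 := hLHS
    _ ≤ ∑ i, |(C' i i).re| := Finset.sum_le_sum fun i _ => hstep i
    _ ≤ ∑ i, |(hA.1.sub hB.1 : (A - B).IsHermitian).eigenvalues i| :=
        abs_diag_bound (hA.1.sub hB.1) U hU2
    _ ≤ traceNorm (A - B) := habs

lemma trace_re_nonneg {M : Matrix n n ℂ} (hM : M.PosSemidef) :
    0 ≤ (M.trace).re := by
  rw [Matrix.trace, Complex.re_sum]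
  exact Finset.sum_nonneg fun i _ => diag_re_nonneg hM i

theorem duplication_final_estimate_aux
    (k : ℕ)
    (M M' : Fin k → Matrix n n ℂ)
    (hM : ∀ i, (M i).PosSemidef) (hM' : ∀ i, (M' i).PosSemidef)
    (htr : ∑ i, ((M i).trace).re ≤ 1) (htr' : ∑ i, ((M' i).trace).re ≤ 1)
    (ε : ℝ) (hε : 0 ≤ ε)
    (hclose : ∑ i, traceNorm (M i - M' i) ≤ 2 * ε) :
    ∑ i, (frobNorm (hM i).sqrt + frobNorm (hM' i).sqrt) *
        frobNorm ((hM i).sqrt - (hM' i).sqrt) ≤ Real.sqrt (8 * ε) := by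
  set a : Fin k → ℝ := fun i => frobNorm (hM i).sqrt with ha
  set b : Fin k → ℝ := fun i => frobNorm (hM' i).sqrt with hb
  set c : Fin k → ℝ := fun i => frobNorm ((hM i).sqrt - (hM' i).sqrt) with hc
  have ha2 : ∀ i, a i ^ 2 = ((M i).trace).re := by
    intro i
    rw [ha]
    show Real.sqrt (((hM i).sqrt ᴴ * (hM i).sqrt).trace).re ^ 2 = _
    rw [(hM i).posSemidef_sqrt.1, (hM i).sqrt_mul_self]
    exact Real.sq_sqrt (trace_re_nonneg (hM i))
  have hb2 : ∀ i, b i ^ 2 = ((M' i).trace).re := by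
    intro i
    rw [hb]
    show Real.sqrt (((hM' i).sqrt ᴴ * (hM' i).sqrt).trace).re ^ 2 = _
    rw [(hM' i).posSemidef_sqrt.1, (hM' i).sqrt_mul_self]
    exact Real.sq_sqrt (trace_re_nonneg (hM' i))
  have hc2 : ∀ i, c i ^ 2 ≤ traceNorm (M i - M' i) := by
    intro i
    have hherm : ((hM i).sqrt - (hM' i).sqrt)ᴴ = (hM i).sqrt - (hM' i).sqrt := by
      rw [Matrix.conjTranspose_sub, (hM i).posSemidef_sqrt.1, (hM' i).posSemidef_sqrt.1]
    have h1 : c i ^ 2 = ((((hM i).sqrt - (hM' i).sqrt) *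
        ((hM i).sqrt - (hM' i).sqrt)).trace).re := by
      rw [hc]
      show Real.sqrt ((((hM i).sqrt - (hM' i).sqrt)ᴴ *
        ((hM i).sqrt - (hM' i).sqrt)).trace).re ^ 2 = _
      rw [hherm]
      refine Real.sq_sqrt ?_
      have := trace_re_nonneg (Matrix.posSemidef_conjTranspose_mul_self
        ((hM i).sqrt - (hM' i).sqrt))
      rwa [hherm] at this
    rw [h1]
    exact powers_stormer (hM i) (hM' i)
      (le_of_eq (traceNorm_hermitian ((hM i).1.sub (hM' i).1)).symm)
  have hanneg : ∀ i, 0 ≤ a i := fun i => Real.sqrt_nonneg _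
  have hbnneg : ∀ i, 0 ≤ b i := fun i => Real.sqrt_nonneg _
  have hcnneg : ∀ i, 0 ≤ c i := fun i => Real.sqrt_nonneg _
  set L : ℝ := ∑ i, (a i + b i) * c i with hL
  have hLnneg : 0 ≤ L :=
    Finset.sum_nonneg fun i _ =>
      mul_nonneg (add_nonneg (hanneg i) (hbnneg i)) (hcnneg i)
  have hCS : L ^ 2 ≤ (∑ i, (a i + b i) ^ 2) * (∑ i, c i ^ 2) :=
    Finset.sum_mul_sq_le_sq_mul_sq Finset.univ (fun i => a i + b i) c
  have h1 : ∑ i, (a i + b i) ^ 2 ≤ 4 := by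
    have : ∀ i, (a i + b i) ^ 2 ≤ 2 * a i ^ 2 + 2 * b i ^ 2 := fun i => by
      nlinarith [sq_nonneg (a i - b i)]
    calc ∑ i, (a i + b i) ^ 2 ≤ ∑ i, (2 * a i ^ 2 + 2 * b i ^ 2) :=
          Finset.sum_le_sum fun i _ => this i
      _ = 2 * (∑ i, a i ^ 2) + 2 * (∑ i, b i ^ 2) := by
          rw [Finset.sum_add_distrib, ← Finset.mul_sum, ← Finset.mul_sum]
      _ = 2 * (∑ i, ((M i).trace).re) + 2 * (∑ i, ((M' i).trace).re) := by
          rw [Finset.sum_congr rfl fun i _ => ha2 i, Finset.sum_congr rfl fun i _ => hb2 i]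
      _ ≤ 4 := by linarith
  have h2 : ∑ i, c i ^ 2 ≤ 2 * ε :=
    le_trans (Finset.sum_le_sum fun i _ => hc2 i) hclose
  have h2' : 0 ≤ ∑ i, c i ^ 2 := Finset.sum_nonneg fun i _ => sq_nonneg _
  have hfinal : L ^ 2 ≤ 8 * ε := by
    calc L ^ 2 ≤ (∑ i, (a i + b i) ^ 2) * (∑ i, c i ^ 2) := hCS
      _ ≤ 4 * (2 * ε) := mul_le_mul h1 h2 h2' (by norm_num)
      _ = 8 * ε := by ring
  calc L = Real.sqrt (L ^ 2) := (Real.sqrt_sq hLnneg).symm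
    _ ≤ Real.sqrt (8 * ε) := Real.sqrt_le_sqrt hfinal

end Aux

theorem duplication_final_estimate
    {n : Type*} [Fintype n] [DecidableEq n] (k : ℕ)
    (M M' : Fin k → Matrix n n ℂ)
    (hM : ∀ i, (M i).PosSemidef) (hM' : ∀ i, (M' i).PosSemidef)
    (htr : ∑ i, ((M i).trace).re ≤ 1) (htr' : ∑ i, ((M' i).trace).re ≤ 1)
    (ε : ℝ) (hε : 0 ≤ ε)
    (hclose : ∑ i, traceNorm (M i - M' i) ≤ 2 * ε) :
    ∑ i, (frobNorm (hM i).sqrt + frobNorm (hM' i).sqrt) *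
        frobNorm ((hM i).sqrt - (hM' i).sqrt) ≤ Real.sqrt (8 * ε) :=
  duplication_final_estimate_aux k M M' hM hM' htr htr' ε hε hclose
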